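/- For q ∈ (0,1), c ∈ ℝ with |c| < 1, and f : Λ_n → ℂ in ℓ²(Λ_n, N⁻¹), the annihilation operator β_l (deleting a part of size l) satisfies the norm bound ⟨β_l f, β_l f⟩_{n−1} ≤ ((1 + |c|δ_{l,0})/(1 − q)) ⟨f, f⟩_n, where ⟨f,g⟩_n = ∑_{λ∈Λ_n} f(λ) conj(g(λ)) N(λ)⁻¹ and N(λ) = (c;q)_{m₀(λ)} ∏_l [m_l(λ)]!. -/
import Mathlib


/-- The q-factorial `[m]! = ∏_{k=1}^m (1-q^k)/(1-q)`. -/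
noncomputable def qFactorial (q : ℝ) (m : ℕ) : ℝ :=
  ∏ k ∈ Finset.range m, (1 - q ^ (k + 1)) / (1 - q)

/-- The norm constant `N(λ) = (c;q)_{m₀(λ)} ∏_l [m_l(λ)]!`, for a partition encoded
as a multiset of parts (zeros included). -/
noncomputable def normConst (q c : ℝ) (s : Multiset ℕ) : ℝ :=
  (∏ j ∈ Finset.range (s.count 0), (1 - c * q ^ j)) *
    ∏ l ∈ s.toFinset, qFactorial q (s.count l)

lemma qFactorial_pos {q : ℝ} (hq0 : 0 < q) (hq1 : q < 1) (m : ℕ) : 0 < qFactorial q m := by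
  apply Finset.prod_pos
  intro k _
  have : q ^ (k+1) < 1 := pow_lt_one₀ hq0.le hq1 (Nat.succ_ne_zero k)
  have : (0:ℝ) < 1 - q := by linarith
  apply div_pos <;> linarith [pow_lt_one₀ hq0.le hq1 (Nat.succ_ne_zero k)]

lemma normConst_pos {q c : ℝ} (hq0 : 0 < q) (hq1 : q < 1) (hc : |c| < 1) (s : Multiset ℕ) :
    0 < normConst q c s := by
  apply mul_pos
  · apply Finset.prod_pos
    intro j _
    have h1 : |c * q ^ j| < 1 := by
      rw [abs_mul, abs_pow, abs_of_pos hq0]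
      calc |c| * q ^ j ≤ |c| * 1 := by
            exact mul_le_mul_of_nonneg_left (pow_le_one₀ hq0.le hq1.le) (abs_nonneg c)
        _ = |c| := by ring
        _ < 1 := hc
    have := (abs_lt.mp h1).2
    linarith
  · exact Finset.prod_pos fun x _ => qFactorial_pos hq0 hq1 _

lemma prod_qfact (q : ℝ) (l : ℕ) (t : Multiset ℕ) :
    ∏ x ∈ (l ::ₘ t).toFinset, qFactorial q ((l ::ₘ t).count x)
      = ((1 - q ^ (t.count l + 1)) / (1 - q)) * ∏ x ∈ t.toFinset, qFactorial q (t.count x) := by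
  have hqf : ∀ m : ℕ, qFactorial q (m + 1) = ((1 - q ^ (m+1)) / (1 - q)) * qFactorial q m := by
    intro m
    rw [qFactorial, Finset.prod_range_succ, qFactorial, mul_comm]
  rw [Multiset.toFinset_cons]
  by_cases h : l ∈ t.toFinset
  · rw [Finset.insert_eq_self.mpr h]
    rw [← Finset.mul_prod_erase _ _ h, ← Finset.mul_prod_erase _ (fun x => qFactorial q (t.count x)) h]
    have h1 : ∀ x ∈ t.toFinset.erase l, qFactorial q ((l ::ₘ t).count x) = qFactorial q (t.count x) := by
      intro x hx
      rw [Multiset.count_cons, if_neg (Finset.ne_of_mem_erase hx), add_zero]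
    rw [Finset.prod_congr rfl h1, Multiset.count_cons_self, hqf]
    ring
  · have hl : t.count l = 0 := Multiset.count_eq_zero.mpr (fun hm => h (Multiset.mem_toFinset.mpr hm))
    rw [Finset.prod_insert h]
    have h1 : ∀ x ∈ t.toFinset, qFactorial q ((l ::ₘ t).count x) = qFactorial q (t.count x) := by
      intro x hx
      rw [Multiset.count_cons, if_neg (by rintro rfl; exact h hx), add_zero]
    rw [Finset.prod_congr rfl h1, Multiset.count_cons_self, hl, hqf]
    norm_num [qFactorial]

lemma normConst_cons (q c : ℝ) (l : ℕ) (t : Multiset ℕ) :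
    normConst q c (l ::ₘ t)
      = (if l = 0 then (1 - c * q ^ (t.count 0)) else 1) *
        ((1 - q ^ (t.count l + 1)) / (1 - q)) * normConst q c t := by
  rw [normConst, normConst, prod_qfact]
  by_cases h : l = 0
  · subst h
    rw [if_pos rfl, Multiset.count_cons_self, Finset.prod_range_succ]
    ring
  · rw [if_neg h, Multiset.count_cons, if_neg (Ne.symm h), add_zero]
    ring

lemma normConst_cons_le {q c : ℝ} (hq0 : 0 < q) (hq1 : q < 1) (hc : |c| < 1) (l : ℕ)
    (t : Multiset ℕ) :
    normConst q c (l ::ₘ t)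
      ≤ ((1 + |c| * (if l = 0 then 1 else 0)) / (1 - q)) * normConst q c t := by
  rw [normConst_cons]
  have hN := (normConst_pos hq0 hq1 hc t).le
  have hq : (0:ℝ) < 1 - q := by linarith
  have hB0 : (0:ℝ) ≤ 1 - q ^ (t.count l + 1) := by
    have := pow_le_one₀ (n := t.count l + 1) hq0.le hq1.le
    linarith
  have hB : (1 - q ^ (t.count l + 1)) / (1 - q) ≤ 1 / (1 - q) := by
    gcongr
    linarith [pow_pos hq0 (Multiset.count l t + 1)]
  have hA : (if l = 0 then (1 - c * q ^ (t.count 0)) else 1) ≤ 1 + |c| * (if l = 0 then 1 else 0) := by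
    by_cases h : l = 0
    · subst h
      have h1 : c * q ^ (t.count 0) ≤ |c * q ^ (t.count 0)| := le_abs_self _
      have h1' : -(c * q ^ (t.count 0)) ≤ |c * q ^ (t.count 0)| := neg_le_abs _
      have h2 : |c * q ^ (t.count 0)| ≤ |c| := by
        rw [abs_mul, abs_pow, abs_of_pos hq0]
        calc |c| * q ^ t.count 0 ≤ |c| * 1 :=
              mul_le_mul_of_nonneg_left (pow_le_one₀ hq0.le hq1.le) (abs_nonneg c)
          _ = |c| := mul_one _
      norm_num
      linarith
    · simp [h]
  have hA0 : (0:ℝ) ≤ (if l = 0 then (1 - c * q ^ (t.count 0)) else 1) := by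
    by_cases h : l = 0
    · subst h
      have h1 : c * q ^ (t.count 0) ≤ |c| := by
        calc c * q ^ (t.count 0) ≤ |c * q ^ (t.count 0)| := le_abs_self _
          _ ≤ |c| := by
            rw [abs_mul, abs_pow, abs_of_pos hq0]
            calc |c| * q ^ t.count 0 ≤ |c| * 1 :=
                  mul_le_mul_of_nonneg_left (pow_le_one₀ hq0.le hq1.le) (abs_nonneg c)
              _ = |c| := mul_one _
      norm_num
      linarith
    · simp [h]
  calc (if l = 0 then (1 - c * q ^ (t.count 0)) else 1) *
        ((1 - q ^ (t.count l + 1)) / (1 - q)) * normConst q c t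
      ≤ (1 + |c| * (if l = 0 then 1 else 0)) * (1 / (1 - q)) * normConst q c t := by
        apply mul_le_mul_of_nonneg_right _ hN
        exact mul_le_mul hA hB (by positivity) (by positivity)
    _ = ((1 + |c| * (if l = 0 then 1 else 0)) / (1 - q)) * normConst q c t := by ring


set_option maxHeartbeats 1000000 in
/-- Norm bound for the annihilation operator `β_l` on the `n`-particle space
`ℓ²(Λ_n, N⁻¹)`: `⟨β_l f, β_l f⟩_{n-1} ≤ ((1 + |c| δ_{l,0})/(1-q)) ⟨f, f⟩_n`, where
`(β_l f)(λ) = f(β_l^* λ)` and `β_l^* λ` inserts a part of size `l`. -/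
theorem annihilation_operator_bound (q c : ℝ) (hq0 : 0 < q) (hq1 : q < 1)
    (hc : |c| < 1) (n : ℕ) (hn : 1 ≤ n) (l : ℕ)
    (f : {s : Multiset ℕ // Multiset.card s = n} → ℂ)
    (hf : Summable fun s : {s : Multiset ℕ // Multiset.card s = n} =>
      ‖f s‖ ^ 2 * (normConst q c s.1)⁻¹) :
    (∑' t : {s : Multiset ℕ // Multiset.card s = n - 1},
        ‖f ⟨l ::ₘ t.1, by simp [t.2, Nat.sub_add_cancel hn]⟩‖ ^ 2 *
          (normConst q c t.1)⁻¹)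
      ≤ ((1 + |c| * (if l = 0 then 1 else 0)) / (1 - q)) *
          ∑' s : {s : Multiset ℕ // Multiset.card s = n},
            ‖f s‖ ^ 2 * (normConst q c s.1)⁻¹ := by
  set C : ℝ := (1 + |c| * (if l = 0 then 1 else 0)) / (1 - q) with hC
  have hq : (0:ℝ) < 1 - q := by linarith
  have hC0 : 0 ≤ C := by
    apply div_nonneg _ hq.le
    have : (0:ℝ) ≤ |c| * (if l = 0 then 1 else 0) := by positivity
    linarith
  set g : {s : Multiset ℕ // Multiset.card s = n - 1} → {s : Multiset ℕ // Multiset.card s = n} :=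
    fun t => ⟨l ::ₘ t.1, by simp [t.2, Nat.sub_add_cancel hn]⟩ with hg
  have hginj : Function.Injective g := by
    intro t1 t2 h
    have h' : l ::ₘ t1.1 = l ::ₘ t2.1 := congrArg Subtype.val h
    exact Subtype.ext ((Multiset.cons_inj_right l).mp h')
  have hpt : ∀ t : {s : Multiset ℕ // Multiset.card s = n - 1},
      ‖f (g t)‖ ^ 2 * (normConst q c t.1)⁻¹ ≤ C * (‖f (g t)‖ ^ 2 * (normConst q c (g t).1)⁻¹) := by
    intro t
    have hNt := normConst_pos hq0 hq1 hc t.1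
    have hNl := normConst_pos hq0 hq1 hc (l ::ₘ t.1)
    have hle : normConst q c (l ::ₘ t.1) ≤ C * normConst q c t.1 :=
      normConst_cons_le hq0 hq1 hc l t.1
    have key : (normConst q c t.1)⁻¹ ≤ C * (normConst q c (l ::ₘ t.1))⁻¹ := by
      calc (normConst q c t.1)⁻¹
          = (normConst q c (l ::ₘ t.1) * (normConst q c (l ::ₘ t.1))⁻¹) * (normConst q c t.1)⁻¹ := by
            rw [mul_inv_cancel₀ hNl.ne', one_mul]
        _ = normConst q c (l ::ₘ t.1) * ((normConst q c t.1)⁻¹ * (normConst q c (l ::ₘ t.1))⁻¹) := by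
            ring
        _ ≤ (C * normConst q c t.1) * ((normConst q c t.1)⁻¹ * (normConst q c (l ::ₘ t.1))⁻¹) :=
            mul_le_mul_of_nonneg_right hle (mul_nonneg (inv_nonneg.mpr hNt.le) (inv_nonneg.mpr hNl.le))
        _ = C * (normConst q c t.1 * (normConst q c t.1)⁻¹) * (normConst q c (l ::ₘ t.1))⁻¹ := by
            ring
        _ = C * (normConst q c (l ::ₘ t.1))⁻¹ := by rw [mul_inv_cancel₀ hNt.ne', mul_one]
    calc ‖f (g t)‖ ^ 2 * (normConst q c t.1)⁻¹
        ≤ ‖f (g t)‖ ^ 2 * (C * (normConst q c (g t).1)⁻¹) :=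
          mul_le_mul_of_nonneg_left key (pow_nonneg (norm_nonneg _) 2)
      _ = C * (‖f (g t)‖ ^ 2 * (normConst q c (g t).1)⁻¹) := by ring
  have hsumR : Summable fun s : {s : Multiset ℕ // Multiset.card s = n} =>
      C * (‖f s‖ ^ 2 * (normConst q c s.1)⁻¹) := hf.mul_left C
  have hsumL : Summable fun t : {s : Multiset ℕ // Multiset.card s = n - 1} =>
      ‖f (g t)‖ ^ 2 * (normConst q c t.1)⁻¹ := by
    exact Summable.of_nonneg_of_le
      (fun t => mul_nonneg (pow_nonneg (norm_nonneg _) 2)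
        (inv_nonneg.mpr (normConst_pos hq0 hq1 hc t.1).le))
      hpt ((hf.comp_injective hginj).mul_left C)
  calc (∑' t : {s : Multiset ℕ // Multiset.card s = n - 1},
        ‖f ⟨l ::ₘ t.1, by simp [t.2, Nat.sub_add_cancel hn]⟩‖ ^ 2 * (normConst q c t.1)⁻¹)
      ≤ ∑' s : {s : Multiset ℕ // Multiset.card s = n},
          C * (‖f s‖ ^ 2 * (normConst q c s.1)⁻¹) := by
        exact Summable.tsum_le_tsum_of_inj g hginj
          (fun s _ => mul_nonneg hC0 (mul_nonneg (pow_nonneg (norm_nonneg _) 2)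
            (inv_nonneg.mpr (normConst_pos hq0 hq1 hc s.1).le)))
          hpt hsumL hsumR
    _ = C * ∑' s : {s : Multiset ℕ // Multiset.card s = n},
          ‖f s‖ ^ 2 * (normConst q c s.1)⁻¹ := tsum_mul_left
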